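/- Let p be prime, 0 ≤ w < m, and let ℓ be a nonzero polynomial over F_p of degree < m - w with e(ℓ) = k, where e(ℓ) is the exact power of x dividing ℓ and k ≤ m - w - 1. Then Y_{p^m,w}(ℓ, x^m) := Σ_{g ∈ G_{p,m-w}(x^m)} Σ_{h ∈ G_{p,m}\{0}} r_p(h) X_p((ℓ/x^{m-w}) h g) = -((p²-1)/(3p)) p^k. -/

import Mathlib

open Polynomial Finset
open scoped Classical

/-- The set `G_{p,m}` of polynomials over `F_p` of degree `< m`. -/
noncomputable def Gset (p m : ℕ) [NeZero p] : Finset (Polynomial (ZMod p)) :=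
  (Finset.univ : Finset (Fin m → ZMod p)).image
    (fun c => ∑ i : Fin m, Polynomial.C (c i) * Polynomial.X ^ (i : ℕ))

/-- `r_p(h) = 1/(p^{a+1} sin²(π h_a/p))` for `h` of degree `a` with leading coefficient `h_a`. -/
noncomputable def rp (p : ℕ) (h : Polynomial (ZMod p)) : ℝ :=
  1 / ((p : ℝ) ^ (h.natDegree + 1) * Real.sin (Real.pi * (h.leadingCoeff.val : ℝ) / p) ^ 2)

/-- `r_p(h,γ) = 1+γ` if `h = 0` and `γ r_p(h)` otherwise. -/
noncomputable def rpw (p : ℕ) (h : Polynomial (ZMod p)) (γ : ℝ) : ℝ :=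
  if h = 0 then 1 + γ else γ * rp p h

/-- The expansion of a rational function over `F_p` as a formal Laurent series in `x⁻¹`:
we substitute `x ↦ t⁻¹` where `t` is the variable of `LaurentSeries (ZMod p)`, so that the
coefficient of `x^{-l}` is the coefficient of `t^l`. -/
noncomputable def laurentAtInfty (p : ℕ) [Fact p.Prime] (q : RatFunc (ZMod p)) :
    LaurentSeries (ZMod p) :=
  RatFunc.eval (HahnSeries.C : ZMod p →+* LaurentSeries (ZMod p))
    (HahnSeries.single (-1 : ℤ) (1 : ZMod p)) q

/-- `X_p(L) = e^{2πi c_{-1}(L)/p}`, where `c_{-1}(L)` is the coefficient of `x⁻¹` of the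
Laurent series expansion in `x⁻¹` of the rational function `q`. -/
noncomputable def Xp (p : ℕ) [Fact p.Prime] (q : RatFunc (ZMod p)) : ℂ :=
  Complex.exp (2 * Real.pi * Complex.I * (((laurentAtInfty p q).coeff 1).val : ℂ) / p)

noncomputable def ep (p : ℕ) (a : ZMod p) : ℂ :=
  Complex.exp (2 * Real.pi * Complex.I * (a.val : ℂ) / p)

section ep
variable (p : ℕ) [Fact p.Prime]

lemma p_pos : 0 < p := (Fact.out : p.Prime).pos

lemma hpC : ((p : ℂ)) ≠ 0 := by exact_mod_cast (p_pos p).ne'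

lemma ep_zero : ep p 0 = 1 := by simp [ep, ZMod.val_zero]

lemma exp_nat_mod (x : ℕ) :
    Complex.exp (2 * Real.pi * Complex.I * ((x % p : ℕ) : ℂ) / p)
      = Complex.exp (2 * Real.pi * Complex.I * (x : ℂ) / p) := by
  have hp0 : ((p:ℂ)) ≠ 0 := hpC p
  conv_rhs => rw [← Nat.div_add_mod x p]
  generalize x / p = q
  rw [show 2 * (Real.pi:ℂ) * Complex.I * (((p * q + x % p : ℕ)) : ℂ) / p
      = ((q : ℕ) : ℂ) * (2 * Real.pi * Complex.I)
        + 2 * Real.pi * Complex.I * ((x % p : ℕ) : ℂ) / p by push_cast; field_simp]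
  rw [Complex.exp_add, show (((q : ℕ)) : ℂ) = (((q : ℕ) : ℤ) : ℂ) by push_cast; ring,
    Complex.exp_int_mul_two_pi_mul_I]
  ring

lemma ep_natCast (x : ℕ) :
    ep p (x : ZMod p) = Complex.exp (2 * Real.pi * Complex.I * (x : ℂ) / p) := by
  haveI : NeZero p := ⟨(p_pos p).ne'⟩
  rw [ep, ZMod.val_natCast, exp_nat_mod]

lemma ep_add (a b : ZMod p) : ep p (a + b) = ep p a * ep p b := by
  haveI : NeZero p := ⟨(p_pos p).ne'⟩
  have h1 : a + b = (((a.val + b.val : ℕ)) : ZMod p) := by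
    push_cast [ZMod.natCast_val, ZMod.cast_id]; ring
  rw [h1, ep_natCast, ep, ep, ← Complex.exp_add]
  congr 1
  push_cast
  ring

lemma ep_pow_nat (b : ZMod p) (x : ℕ) : ep p (b * x) = ep p b ^ x := by
  induction x with
  | zero => simp [ep_zero]
  | succ n ih =>
      have : b * ((n+1 : ℕ) : ZMod p) = b * n + b := by push_cast; ring
      rw [this, ep_add, ih, pow_succ]

lemma ep_eq_one_iff (a : ZMod p) : ep p a = 1 ↔ a = 0 := by
  constructor
  · intro h
    have hlt : a.val < p := ZMod.val_lt a
    rw [ep, Complex.exp_eq_one_iff] at h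
    obtain ⟨n, hn⟩ := h
    have hp0 : ((p:ℂ)) ≠ 0 := hpC p
    have h2 : (2 * (Real.pi:ℂ) * Complex.I) ≠ 0 := by
      simp [Real.pi_ne_zero, Complex.I_ne_zero]
    rw [div_eq_iff hp0] at hn
    have hv : ((a.val : ℂ)) = (n : ℂ) * p := by
      have := mul_left_cancel₀ h2
        (show 2 * (Real.pi:ℂ) * Complex.I * (a.val:ℂ)
            = 2 * (Real.pi:ℂ) * Complex.I * ((n:ℂ) * p) by linear_combination hn)
      exact this
    have hvz : ((a.val : ℤ)) = n * p := by exact_mod_cast hv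
    have hppos : (0:ℤ) < p := by exact_mod_cast p_pos p
    have hn0 : n = 0 := by nlinarith [Int.ofNat_nonneg a.val, (by exact_mod_cast hlt : (a.val:ℤ) < (p:ℤ))]
    rw [hn0, zero_mul] at hvz
    have : a.val = 0 := by exact_mod_cast hvz
    exact (ZMod.val_eq_zero a).mp this
  · rintro rfl; exact ep_zero p

lemma ep_one_ne_one : ep p (1 : ZMod p) ≠ 1 := by
  intro h
  haveI : NeZero p := ⟨(p_pos p).ne'⟩
  haveI : Nontrivial (ZMod p) := by
    have := (Fact.out : p.Prime).one_lt
    exact ZMod.nontrivial_iff.mpr (by omega)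
  exact one_ne_zero ((ep_eq_one_iff p 1).mp h)

lemma sum_ep : ∑ a : ZMod p, ep p a = 0 := by
  have h : ∑ a : ZMod p, ep p (a + 1) = ∑ a : ZMod p, ep p a :=
    Fintype.sum_equiv (Equiv.addRight (1 : ZMod p)) _ _ (fun a => rfl)
  have h2 : ∑ a : ZMod p, ep p (a + 1) = ep p 1 * ∑ a : ZMod p, ep p a := by
    rw [Finset.mul_sum]
    exact Finset.sum_congr rfl fun a _ => by rw [ep_add, mul_comm]
  have h3 : (ep p 1 - 1) * (∑ a : ZMod p, ep p a) = 0 := by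
    have := h2.symm.trans h
    linear_combination this
  rcases mul_eq_zero.mp h3 with h' | h'
  · exact absurd (by linear_combination h' : ep p 1 = 1) (ep_one_ne_one p)
  · exact h'

lemma sum_ep_mul (b : ZMod p) : ∑ a : ZMod p, ep p (b * a) = if b = 0 then (p : ℂ) else 0 := by
  haveI : NeZero p := ⟨(p_pos p).ne'⟩
  split_ifs with hb
  · subst hb; simp [ep_zero, Finset.card_univ, ZMod.card]
  · rw [← sum_ep p]
    exact Fintype.sum_equiv (Equiv.mulLeft₀ b hb) _ _ (fun a => rfl)

lemma sum_ep_mul_ne (b : ZMod p) :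
    ∑ a ∈ Finset.univ.filter (fun a : ZMod p => a ≠ 0), ep p (b * a)
      = if b = 0 then ((p : ℂ) - 1) else -1 := by
  have key : ∑ a ∈ Finset.univ.filter (fun a : ZMod p => a ≠ 0), ep p (b * a)
      = (∑ a : ZMod p, ep p (b * a)) - ep p (b * 0) := by
    rw [Finset.filter_ne', Finset.sum_erase_eq_sub (Finset.mem_univ 0)]
  rw [key, sum_ep_mul, mul_zero, ep_zero]
  split_ifs <;> ring

end ep
section csc
variable (p : ℕ) [Fact p.Prime]

/-- `cs c = sin²(π c.val / p)`. -/
noncomputable def cs (c : ZMod p) : ℝ := Real.sin (Real.pi * (c.val : ℝ) / p) ^ 2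

lemma cs_pos {c : ZMod p} (hc : c ≠ 0) : 0 < cs p c := by
  have hp : (0:ℝ) < p := by exact_mod_cast p_pos p
  have h1 : 1 ≤ c.val := Nat.one_le_iff_ne_zero.mpr (fun h => hc ((ZMod.val_eq_zero c).mp h))
  have h2 : c.val < p := ZMod.val_lt c
  have hlb : 0 < Real.pi * (c.val : ℝ) / p := by
    have : (0:ℝ) < (c.val:ℝ) := by exact_mod_cast h1
    positivity
  have hub : Real.pi * (c.val : ℝ) / p < Real.pi := by
    rw [div_lt_iff₀ hp]
    have : (c.val:ℝ) < p := by exact_mod_cast h2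
    nlinarith [Real.pi_pos]
  have := Real.sin_pos_of_pos_of_lt_pi hlb hub
  exact pow_pos this 2

/-- `F b = Σ_{x<p} x e_p(bx)`. -/
noncomputable def Fc (b : ZMod p) : ℂ := ∑ x ∈ Finset.range p, (x:ℂ) * ep p (b * x)

lemma geom_aux (z : ℂ) (n : ℕ) :
    (1 - z) * ∑ x ∈ Finset.range n, (x:ℂ) * z ^ x
      = (∑ x ∈ Finset.range n, z ^ x) - 1 - ((n:ℂ) - 1) * z ^ n := by
  induction n with
  | zero => simp
  | succ n ih =>
      rw [Finset.sum_range_succ, Finset.sum_range_succ, mul_add, ih]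
      push_cast
      ring

lemma Fc_eq {b : ZMod p} (hb : b ≠ 0) : Fc p b = -(p:ℂ) / (1 - ep p b) := by
  have hz1 : ep p b ≠ 1 := fun h => hb ((ep_eq_one_iff p b).mp h)
  have hzp : ep p b ^ p = 1 := by
    rw [← ep_pow_nat, ZMod.natCast_self, mul_zero, ep_zero]
  have hgeom : ∑ x ∈ Finset.range p, ep p b ^ x = 0 := by
    have := geom_sum_eq hz1 p
    rw [this, hzp, sub_self, zero_div]
  have key := geom_aux (ep p b) p
  rw [hgeom, hzp] at key
  have h1z : (1 - ep p b) ≠ 0 := sub_ne_zero.mpr (Ne.symm hz1)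
  have hFc : Fc p b = ∑ x ∈ Finset.range p, (x:ℂ) * ep p b ^ x := by
    unfold Fc
    exact Finset.sum_congr rfl fun x _ => by rw [ep_pow_nat]
  rw [hFc, eq_div_iff h1z]
  rw [mul_comm] at key
  rw [key]; ring

lemma conj_ep (a : ZMod p) : (starRingEnd ℂ) (ep p a) = (ep p a)⁻¹ := by
  rw [← Complex.inv_eq_conj]
  rw [ep, show 2 * (Real.pi:ℂ) * Complex.I * ((a.val:ℕ):ℂ) / p
      = ((2 * Real.pi * (a.val:ℕ) / p : ℝ) : ℂ) * Complex.I by push_cast; ring]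
  exact Complex.norm_exp_ofReal_mul_I _

lemma ep_mul_ep_neg (a : ZMod p) : ep p a * ep p (-a) = 1 := by
  rw [← ep_add, add_neg_cancel, ep_zero]

lemma ep_neg (a : ZMod p) : ep p (-a) = (ep p a)⁻¹ :=
  (inv_eq_of_mul_eq_one_right (ep_mul_ep_neg p a)).symm

lemma conj_ep' (a : ZMod p) : (starRingEnd ℂ) (ep p a) = ep p (-a) :=
  (conj_ep p a).trans (ep_neg p a).symm

lemma ep_ne_zero (a : ZMod p) : ep p a ≠ 0 := Complex.exp_ne_zero _

/-- `(1 - ep b)(1 - conj(ep b)) = 4 sin²(π b.val/p)` -/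
lemma one_sub_ep_normSq {b : ZMod p} :
    (1 - ep p b) * (1 - (starRingEnd ℂ) (ep p b)) = ((4 * cs p b : ℝ) : ℂ) := by
  have h1 : ((2 * Real.pi * (b.val:ℝ) / p : ℝ) : ℂ) = 2 * (Real.pi:ℂ) * ((b.val:ℕ):ℂ) / (p:ℂ) := by
    push_cast; ring
  have hexp : ep p b = Complex.exp (((2 * Real.pi * (b.val:ℝ) / p : ℝ):ℂ) * Complex.I) := by
    rw [ep, h1]; congr 1; ring
  have hcos : ep p b = Complex.cos ((2 * Real.pi * (b.val:ℝ) / p : ℝ):ℂ)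
      + Complex.sin ((2 * Real.pi * (b.val:ℝ) / p : ℝ):ℂ) * Complex.I := by
    rw [hexp, Complex.exp_mul_I]
  have hconj : (starRingEnd ℂ) (ep p b) = Complex.cos ((2 * Real.pi * (b.val:ℝ) / p : ℝ):ℂ)
      - Complex.sin ((2 * Real.pi * (b.val:ℝ) / p : ℝ):ℂ) * Complex.I := by
    rw [conj_ep' p b, ep_neg, hexp, ← Complex.exp_neg,
      show -((((2 * Real.pi * (b.val:ℝ) / p : ℝ)):ℂ) * Complex.I)
        = ((-(2 * Real.pi * (b.val:ℝ) / p) : ℝ):ℂ) * Complex.I by push_cast; ring,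
      Complex.exp_mul_I]
    push_cast
    rw [Complex.cos_neg, Complex.sin_neg]
    push_cast
    ring
  rw [hconj, hcos]
  have hpyth : Complex.cos ((2 * Real.pi * (b.val:ℝ) / p : ℝ):ℂ) ^ 2
      + Complex.sin ((2 * Real.pi * (b.val:ℝ) / p : ℝ):ℂ) ^ 2 = 1 := Complex.cos_sq_add_sin_sq _
  have hcs : cs p b = (1 - Real.cos (2 * Real.pi * (b.val:ℝ) / p)) / 2 := by
    rw [cs, show Real.pi * (b.val:ℝ) / p = (2 * Real.pi * (b.val:ℝ) / p) / 2 by ring,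
      Real.sin_sq_eq_half_sub]
    rw [show 2 * ((2 * Real.pi * (b.val:ℝ) / p) / 2) = 2 * Real.pi * (b.val:ℝ) / p by ring]
    ring
  rw [hcs]
  push_cast
  push_cast at hpyth
  linear_combination hpyth - Complex.sin (2 * (Real.pi:ℂ) * ((b.val:ℕ):ℂ) / (p:ℂ)) ^ 2 * Complex.I_sq
end csc
section parseval
variable (p : ℕ) [Fact p.Prime]

lemma sum_range_id_C (n : ℕ) : ∑ x ∈ Finset.range n, (x:ℂ) = ((n:ℂ)^2 - n)/2 := by
  induction n with
  | zero => simp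
  | succ n ih => rw [Finset.sum_range_succ, ih]; push_cast; ring

lemma sum_range_sq_C (n : ℕ) :
    ∑ x ∈ Finset.range n, (x:ℂ)^2 = (2*(n:ℂ)^3 - 3*(n:ℂ)^2 + n)/6 := by
  induction n with
  | zero => simp
  | succ n ih => rw [Finset.sum_range_succ, ih]; push_cast; ring

lemma Fc_zero : Fc p 0 = ((p:ℂ)^2 - p)/2 := by
  rw [Fc]
  rw [show ∑ x ∈ Finset.range p, (x:ℂ) * ep p (0 * x) = ∑ x ∈ Finset.range p, (x:ℂ) from
    Finset.sum_congr rfl fun x _ => by rw [zero_mul, ep_zero, mul_one]]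
  exact sum_range_id_C p

lemma parseval : ∑ b : ZMod p, Fc p b * (starRingEnd ℂ) (Fc p b)
    = (p:ℂ) * ∑ x ∈ Finset.range p, (x:ℂ)^2 := by
  haveI : NeZero p := ⟨(p_pos p).ne'⟩
  have hconjF : ∀ b : ZMod p, (starRingEnd ℂ) (Fc p b)
      = ∑ y ∈ Finset.range p, (y:ℂ) * ep p (-(b*y)) := by
    intro b
    rw [Fc, map_sum]
    exact Finset.sum_congr rfl fun y _ => by rw [map_mul, Complex.conj_natCast, conj_ep']
  have step1 : ∀ b : ZMod p, Fc p b * (starRingEnd ℂ) (Fc p b)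
      = ∑ x ∈ Finset.range p, ∑ y ∈ Finset.range p,
          (x:ℂ)*(y:ℂ) * ep p (((x:ZMod p) - (y:ZMod p)) * b) := by
    intro b
    rw [hconjF, Fc, Finset.sum_mul_sum]
    refine Finset.sum_congr rfl fun x _ => Finset.sum_congr rfl fun y _ => ?_
    rw [show ((x:ZMod p) - (y:ZMod p)) * b = b * x + -(b*y) by ring, ep_add]
    ring
  calc ∑ b : ZMod p, Fc p b * (starRingEnd ℂ) (Fc p b)
      = ∑ b : ZMod p, ∑ x ∈ Finset.range p, ∑ y ∈ Finset.range p,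
          (x:ℂ)*(y:ℂ) * ep p (((x:ZMod p) - (y:ZMod p)) * b) :=
        Finset.sum_congr rfl fun b _ => step1 b
    _ = ∑ x ∈ Finset.range p, ∑ y ∈ Finset.range p,
          (x:ℂ)*(y:ℂ) * ∑ b : ZMod p, ep p (((x:ZMod p) - (y:ZMod p)) * b) := by
        rw [Finset.sum_comm]
        refine Finset.sum_congr rfl fun x _ => ?_
        rw [Finset.sum_comm]
        exact Finset.sum_congr rfl fun y _ => by rw [Finset.mul_sum]
    _ = ∑ x ∈ Finset.range p, (x:ℂ)*(x:ℂ)*(p:ℂ) := by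
        refine Finset.sum_congr rfl fun x hx => ?_
        rw [Finset.sum_eq_single x]
        · rw [sum_ep_mul, if_pos (by rw [sub_self])]
        · intro y hy hyx
          rw [sum_ep_mul, if_neg, mul_zero]
          intro hcon
          apply hyx
          have : (x:ZMod p) = (y:ZMod p) := by
            have := sub_eq_zero.mp hcon; exact this
          have hx' := ZMod.val_cast_of_lt (Finset.mem_range.mp hx)
          have hy' := ZMod.val_cast_of_lt (Finset.mem_range.mp hy)
          rw [← hy', ← hx', this]
        · intro hxx; exact absurd hx hxx
    _ = (p:ℂ) * ∑ x ∈ Finset.range p, (x:ℂ)^2 := by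
        rw [Finset.mul_sum]; exact Finset.sum_congr rfl fun x _ => by ring

lemma Fc_mul_conj {b : ZMod p} (hb : b ≠ 0) :
    Fc p b * (starRingEnd ℂ) (Fc p b) = (((p:ℝ)^2 / 4 * (1 / cs p b) : ℝ) : ℂ) := by
  have hz1 : ep p b ≠ 1 := fun h => hb ((ep_eq_one_iff p b).mp h)
  have h1z : (1 - ep p b) ≠ 0 := sub_ne_zero.mpr (Ne.symm hz1)
  have h1zc : (1 - (starRingEnd ℂ) (ep p b)) ≠ 0 := by
    intro h
    apply h1z
    have := congrArg (starRingEnd ℂ) h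
    simpa using this
  have hcs := cs_pos p hb
  have hcFc : (starRingEnd ℂ) (Fc p b) = -(p:ℂ) / (1 - (starRingEnd ℂ) (ep p b)) := by
    rw [Fc_eq p hb, map_div₀, map_neg, Complex.conj_natCast, map_sub, map_one]
  rw [hcFc, Fc_eq p hb, div_mul_div_comm, one_sub_ep_normSq]
  rw [show -(p:ℂ) * -(p:ℂ) = ((((p:ℝ)^2 : ℝ)):ℂ) by push_cast; ring]
  rw [← Complex.ofReal_div]
  congr 1
  ring

lemma sum_csc : ∑ b ∈ Finset.univ.filter (fun b : ZMod p => b ≠ 0), 1 / cs p b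
    = ((p:ℝ)^2 - 1)/3 := by
  haveI : NeZero p := ⟨(p_pos p).ne'⟩
  have hsplit : ∑ b : ZMod p, Fc p b * (starRingEnd ℂ) (Fc p b)
      = Fc p 0 * (starRingEnd ℂ) (Fc p 0)
        + ∑ b ∈ Finset.univ.filter (fun b : ZMod p => b ≠ 0), Fc p b * (starRingEnd ℂ) (Fc p b) := by
    rw [Finset.filter_ne']
    exact (Finset.add_sum_erase _ (fun b : ZMod p => Fc p b * (starRingEnd ℂ) (Fc p b))
      (Finset.mem_univ (0 : ZMod p))).symm
  have hF0 : Fc p 0 * (starRingEnd ℂ) (Fc p 0) = (((p:ℂ)^2 - p)/2)^2 := by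
    rw [Fc_zero, show (starRingEnd ℂ) (((p:ℂ)^2 - p)/2) = ((p:ℂ)^2 - p)/2 by
      rw [map_div₀, map_sub, map_pow, Complex.conj_natCast, map_ofNat]]
    ring
  have hne : ∑ b ∈ Finset.univ.filter (fun b : ZMod p => b ≠ 0), Fc p b * (starRingEnd ℂ) (Fc p b)
      = (((p:ℝ)^2/4 * ∑ b ∈ Finset.univ.filter (fun b : ZMod p => b ≠ 0), 1 / cs p b : ℝ) : ℂ) := by
    rw [Complex.ofReal_mul, Complex.ofReal_sum, Finset.mul_sum]
    exact Finset.sum_congr rfl fun b hb => by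
      rw [Fc_mul_conj p (Finset.mem_filter.mp hb).2]; push_cast; ring
  have key := hsplit
  rw [parseval, hF0, hne, sum_range_sq_C] at key
  -- key : p * (2p³-3p²+p)/6 = ((p²-p)/2)² + ofReal (p²/4 * S)
  have hp0 : ((p:ℂ)) ≠ 0 := hpC p
  have hS : ((( ∑ b ∈ Finset.univ.filter (fun b : ZMod p => b ≠ 0), 1 / cs p b : ℝ)) : ℂ)
      = ((p:ℂ)^2 - 1)/3 := by
    have h4 : ((p:ℂ)^2/4) ≠ 0 := div_ne_zero (pow_ne_zero 2 hp0) (by norm_num)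
    apply mul_left_cancel₀ h4
    push_cast at key ⊢
    linear_combination -key
  have := hS
  rw [show ((p:ℂ)^2 - 1)/3 = ((((p:ℝ)^2 - 1)/3 : ℝ) : ℂ) by push_cast; ring] at this
  exact_mod_cast this

end parseval
section gsetsec
variable (p : ℕ) [Fact p.Prime]

noncomputable def phiP (s : ℕ) (a : Fin s → ZMod p) : Polynomial (ZMod p) :=
  ∑ i : Fin s, Polynomial.C (a i) * Polynomial.X ^ (i : ℕ)

lemma coeff_phiP (s : ℕ) (a : Fin s → ZMod p) (t : ℕ) :
    (phiP p s a).coeff t = if h : t < s then a ⟨t, h⟩ else 0 := by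
  rw [phiP, Polynomial.finset_sum_coeff]
  have h1 : ∀ i : Fin s, (Polynomial.C (a i) * Polynomial.X ^ (i:ℕ)).coeff t
      = if t = (i:ℕ) then a i else 0 := fun i => by
    rw [Polynomial.coeff_C_mul, Polynomial.coeff_X_pow]
    split_ifs <;> simp
  rw [Finset.sum_congr rfl fun i _ => h1 i]
  split_ifs with h
  · rw [Finset.sum_eq_single (⟨t, h⟩ : Fin s)]
    · simp
    · intro i _ hne
      rw [if_neg]
      intro hti
      exact hne (by exact Fin.ext hti.symm)
    · intro habs; exact absurd (Finset.mem_univ _) habs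
  · apply Finset.sum_eq_zero
    intro i _
    rw [if_neg]
    intro hti
    exact h (hti ▸ i.isLt)

lemma phiP_injective (s : ℕ) : Function.Injective (phiP p s) := by
  intro a b hab
  funext i
  have := congrArg (fun q => Polynomial.coeff q (i:ℕ)) hab
  simpa [coeff_phiP, i.isLt] using this

lemma Gset_eq_image (s : ℕ) :
    Gset p s = (Finset.univ : Finset (Fin s → ZMod p)).image (phiP p s) := rfl

lemma mem_Gset {s : ℕ} {q : Polynomial (ZMod p)} :
    q ∈ Gset p s ↔ q.degree < (s : WithBot ℕ) := by
  rw [Gset_eq_image, Finset.mem_image]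
  constructor
  · rintro ⟨a, -, rfl⟩
    rw [phiP]
    refine lt_of_le_of_lt (Polynomial.degree_sum_le _ _) ?_
    rw [Finset.sup_lt_iff (by exact_mod_cast WithBot.bot_lt_coe s)]
    intro i _
    refine lt_of_le_of_lt (Polynomial.degree_C_mul_X_pow_le _ _) ?_
    exact_mod_cast Nat.cast_lt.mpr i.isLt
  · intro hdeg
    refine ⟨fun i => q.coeff (i:ℕ), Finset.mem_univ _, ?_⟩
    ext t
    rw [coeff_phiP]
    split_ifs with h
    · rfl
    · exact (Polynomial.coeff_eq_zero_of_degree_lt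
        (lt_of_lt_of_le hdeg (by exact_mod_cast Nat.le_of_not_lt h))).symm

end gsetsec

section laurent
variable (p : ℕ) [Fact p.Prime]

universe u_rf
lemma ratfunc_eval_div {K L : Type u_rf} [Field K] [Field L] (f : K →+* L) (al : L)
    (P Q : Polynomial K) (hQ : Q ≠ 0) (hQa : Q.eval₂ f al ≠ 0) :
    RatFunc.eval f al (algebraMap (Polynomial K) (RatFunc K) P
        / algebraMap (Polynomial K) (RatFunc K) Q)
      = P.eval₂ f al / Q.eval₂ f al := by
  set x := algebraMap (Polynomial K) (RatFunc K) P / algebraMap (Polynomial K) (RatFunc K) Q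
    with hx
  have hdvd : x.denom ∣ Q := (RatFunc.denom_dvd hQ).mpr ⟨P, hx⟩
  obtain ⟨R, hR⟩ := hdvd
  have hden : x.denom.eval₂ f al ≠ 0 := fun h => hQa (by
    rw [hR, Polynomial.eval₂_mul, h, zero_mul])
  have hQ0 : algebraMap (Polynomial K) (RatFunc K) Q ≠ 0 := RatFunc.algebraMap_ne_zero hQ
  have hd0 : algebraMap (Polynomial K) (RatFunc K) x.denom ≠ 0 :=
    RatFunc.algebraMap_ne_zero x.denom_ne_zero
  have h1 : algebraMap (Polynomial K) (RatFunc K) x.num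
      / algebraMap (Polynomial K) (RatFunc K) x.denom
      = algebraMap (Polynomial K) (RatFunc K) P / algebraMap (Polynomial K) (RatFunc K) Q :=
    (RatFunc.num_div_denom x).trans hx
  have h2 : algebraMap (Polynomial K) (RatFunc K) (x.num * Q)
      = algebraMap (Polynomial K) (RatFunc K) (P * x.denom) := by
    rw [map_mul, map_mul]
    exact (div_eq_div_iff hd0 hQ0).mp h1
  have hcross : x.num * Q = P * x.denom := RatFunc.algebraMap_injective K h2
  have heval : x.num.eval₂ f al * Q.eval₂ f al = P.eval₂ f al * x.denom.eval₂ f al := by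
    rw [← Polynomial.eval₂_mul, ← Polynomial.eval₂_mul, hcross]
  show x.num.eval₂ f al / x.denom.eval₂ f al = P.eval₂ f al / Q.eval₂ f al
  rw [div_eq_div_iff hden hQa]
  exact heval

lemma eval2_hahn_coeff (P : Polynomial (ZMod p)) (j : ℕ) :
    (P.eval₂ (HahnSeries.C : ZMod p →+* LaurentSeries (ZMod p))
        (HahnSeries.single (-1 : ℤ) (1 : ZMod p))).coeff (-(j:ℤ)) = P.coeff j := by
  rw [Polynomial.eval₂_eq_sum_range]
  have hterm : ∀ i : ℕ, (HahnSeries.C : ZMod p →+* LaurentSeries (ZMod p)) (P.coeff i)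
      * (HahnSeries.single (-1 : ℤ) (1 : ZMod p)) ^ i
      = HahnSeries.single (-(i:ℤ)) (P.coeff i) := by
    intro i
    rw [HahnSeries.single_pow, HahnSeries.C_apply, HahnSeries.single_mul_single]
    congr 1
    · simp
    · simp
  rw [Finset.sum_congr rfl fun i _ => hterm i]
  have hcoeff : ∀ (s : Finset ℕ),
      (∑ i ∈ s, HahnSeries.single (-(i:ℤ)) (P.coeff i)).coeff (-(j:ℤ))
        = ∑ i ∈ s, (HahnSeries.single (-(i:ℤ)) (P.coeff i)).coeff (-(j:ℤ)) := by
    intro s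
    exact map_sum (HahnSeries.coeff.addMonoidHom (-(j:ℤ))) _ s
  rw [hcoeff]
  by_cases hj : j ∈ Finset.range (P.natDegree + 1)
  · rw [Finset.sum_eq_single j]
    · rw [HahnSeries.coeff_single_same]
    · intro i _ hij
      rw [HahnSeries.coeff_single_of_ne]
      intro hcon
      exact hij (by omega)
    · intro h; exact absurd hj h
  · rw [Finset.sum_eq_zero, eq_comm]
    · apply Polynomial.coeff_eq_zero_of_natDegree_lt
      simp only [Finset.mem_range] at hj
      omega
    · intro i hi
      rw [HahnSeries.coeff_single_of_ne]
      intro hcon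
      simp only [Finset.mem_range] at hi hj
      omega

lemma laurent_coeff_one (P : Polynomial (ZMod p)) (n : ℕ) (hn : 0 < n) :
    (laurentAtInfty p (algebraMap (Polynomial (ZMod p)) (RatFunc (ZMod p)) P
        / algebraMap (Polynomial (ZMod p)) (RatFunc (ZMod p)) (Polynomial.X ^ n))).coeff 1
      = P.coeff (n - 1) := by
  have hXn : (Polynomial.X : Polynomial (ZMod p)) ^ n ≠ 0 :=
    pow_ne_zero n Polynomial.X_ne_zero
  have hsingle_ne : (HahnSeries.single (-(n:ℤ)) (1 : ZMod p)) ≠ 0 := by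
    intro h
    have := congrArg (fun x => HahnSeries.coeff x (-(n:ℤ))) h
    simp [HahnSeries.coeff_single_same] at this
  have heval : (Polynomial.X ^ n : Polynomial (ZMod p)).eval₂
      (HahnSeries.C : ZMod p →+* LaurentSeries (ZMod p))
      (HahnSeries.single (-1 : ℤ) (1 : ZMod p))
      = HahnSeries.single (-(n:ℤ)) (1 : ZMod p) := by
    rw [Polynomial.eval₂_X_pow, HahnSeries.single_pow]
    congr 1
    · simp
    · simp
  rw [laurentAtInfty, ratfunc_eval_div _ _ _ _ hXn (by rw [heval]; exact hsingle_ne), heval]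
  have hinv : (HahnSeries.single (-(n:ℤ)) (1 : ZMod p))⁻¹
      = HahnSeries.single ((n:ℤ)) (1 : ZMod p) := by
    apply inv_eq_of_mul_eq_one_right
    rw [HahnSeries.single_mul_single, neg_add_cancel, mul_one, HahnSeries.single_zero_one]
  rw [div_eq_mul_inv, hinv]
  have h1n : (1 - (n:ℤ)) = -(((n - 1 : ℕ)):ℤ) := by
    have h1 : 1 ≤ n := hn
    push_cast [Nat.cast_sub h1]
    ring
  have hkey := HahnSeries.coeff_mul_single_add (Γ := ℤ) (R := ZMod p) (r := 1)
    (x := P.eval₂ (HahnSeries.C : ZMod p →+* LaurentSeries (ZMod p))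
      (HahnSeries.single (-1 : ℤ) (1 : ZMod p))) (a := 1 - (n:ℤ)) (b := (n:ℤ))
  rw [show (1 - (n:ℤ)) + n = 1 by ring] at hkey
  rw [hkey, mul_one, h1n, eval2_hahn_coeff]

end laurent
section counting
variable (p : ℕ) [Fact p.Prime]

lemma rp_eq (h : Polynomial (ZMod p)) :
    rp p h = 1 / ((p:ℝ) ^ (h.natDegree + 1) * cs p h.leadingCoeff) := rfl

lemma rp_X_pow_mul (j : ℕ) {h : Polynomial (ZMod p)} (hh : h ≠ 0) :
    rp p (Polynomial.X ^ j * h) = rp p h / (p:ℝ)^j := by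
  have hX : (Polynomial.X : Polynomial (ZMod p)) ^ j ≠ 0 := pow_ne_zero _ Polynomial.X_ne_zero
  have hdeg : (Polynomial.X ^ j * h).natDegree = j + h.natDegree := by
    rw [Polynomial.natDegree_mul hX hh, Polynomial.natDegree_X_pow]
  have hlead : (Polynomial.X ^ j * h).leadingCoeff = h.leadingCoeff := by
    rw [Polynomial.leadingCoeff_mul, Polynomial.monic_X_pow j |>.leadingCoeff, one_mul]
  rw [rp_eq, rp_eq, hdeg, hlead, div_div]
  congr 1
  rw [pow_add]
  ring

/-- sum of `rp` over polynomials of degree exactly `a`. -/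
lemma rp_sum_fiber (s a : ℕ) (ha : a < s) :
    ∑ h ∈ ((Gset p s).filter (fun h => h ≠ 0)).filter (fun h => h.natDegree = a), rp p h
      = (((p:ℝ)^2 - 1)/3) / p := by
  classical
  -- reindex by (lower coefficients, leading coefficient)
  set T : Finset ((Fin a → ZMod p) × ZMod p) :=
    Finset.univ ×ˢ Finset.univ.filter (fun c : ZMod p => c ≠ 0) with hT
  have hmemj : ∀ bc ∈ T, phiP p a bc.1 + Polynomial.C bc.2 * Polynomial.X ^ a
      ∈ ((Gset p s).filter (fun h => h ≠ 0)).filter (fun h => h.natDegree = a) := by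
    rintro ⟨b, c⟩ hbc
    simp only [hT, Finset.mem_product, Finset.mem_univ, Finset.mem_filter, true_and] at hbc
    have hdegφ : (phiP p a b).degree < (a : WithBot ℕ) := by
      have : phiP p a b ∈ Gset p a := Finset.mem_image.mpr ⟨b, Finset.mem_univ _, rfl⟩
      exact (mem_Gset p).mp this
    have hdegC : (Polynomial.C c * Polynomial.X ^ a).degree = (a : WithBot ℕ) :=
      Polynomial.degree_C_mul_X_pow a hbc
    have hdeg : (phiP p a b + Polynomial.C c * Polynomial.X ^ a).degree = (a : WithBot ℕ) := by
      rw [Polynomial.degree_add_eq_right_of_degree_lt (by rw [hdegC]; exact hdegφ), hdegC]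
    have hne : phiP p a b + Polynomial.C c * Polynomial.X ^ a ≠ 0 := by
      intro h0
      rw [h0, Polynomial.degree_zero] at hdeg
      exact absurd hdeg.symm (by simp)
    simp only [Finset.mem_filter, mem_Gset]
    refine ⟨⟨?_, hne⟩, ?_⟩
    · rw [hdeg]; exact_mod_cast Nat.cast_lt.mpr ha
    · exact Polynomial.natDegree_eq_of_degree_eq_some hdeg
  have hcoeffj : ∀ (b : Fin a → ZMod p) (c : ZMod p) (t : ℕ),
      (phiP p a b + Polynomial.C c * Polynomial.X ^ a).coeff t
        = if h : t < a then b ⟨t, h⟩ else (if t = a then c else 0) := by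
    intro b c t
    rw [Polynomial.coeff_add, coeff_phiP, Polynomial.coeff_C_mul, Polynomial.coeff_X_pow]
    split_ifs with h1 h2
    · omega
    · simp
    · simp
    · simp
  have key : ∑ h ∈ ((Gset p s).filter (fun h => h ≠ 0)).filter (fun h => h.natDegree = a), rp p h
      = ∑ bc ∈ T, 1 / ((p:ℝ)^(a+1) * cs p bc.2) := by
    refine Finset.sum_bij'
      (fun (h : Polynomial (ZMod p)) (_ : h ∈ ((Gset p s).filter (fun h => h ≠ 0)).filter
          (fun h => h.natDegree = a)) =>
        ((fun i : Fin a => h.coeff (i:ℕ), h.coeff a) : (Fin a → ZMod p) × ZMod p))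
      (fun bc _ => phiP p a bc.1 + Polynomial.C bc.2 * Polynomial.X ^ a)
      ?_ hmemj ?_ ?_ ?_
    · intro h hmem
      simp only [Finset.mem_filter, mem_Gset] at hmem
      obtain ⟨⟨hdeg, hne⟩, hnd⟩ := hmem
      simp only [hT, Finset.mem_product, Finset.mem_univ, Finset.mem_filter, true_and]
      rw [← hnd]
      exact Polynomial.leadingCoeff_ne_zero.mpr hne
    · intro h hmem
      simp only [Finset.mem_filter, mem_Gset] at hmem
      obtain ⟨⟨hdeg, hne⟩, hnd⟩ := hmem
      ext t
      rw [hcoeffj]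
      split_ifs with h1 h2
      · rfl
      · rw [h2]
      · exact (Polynomial.coeff_eq_zero_of_natDegree_lt (by omega)).symm
    · rintro ⟨b, c⟩ hbc
      have h1 := hcoeffj b c
      ext : 1
      · funext i
        simp only [h1, i.isLt, dif_pos]
      · simp [h1]
    · intro h hmem
      simp only [Finset.mem_filter, mem_Gset] at hmem
      obtain ⟨⟨hdeg, hne⟩, hnd⟩ := hmem
      rw [rp_eq, hnd]
      congr 2
      rw [Polynomial.leadingCoeff, hnd]
  rw [key, hT, Finset.sum_product]
  rw [Finset.sum_congr rfl (fun b _ => rfl)]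
  have hinner : ∀ b : Fin a → ZMod p,
      ∑ c ∈ Finset.univ.filter (fun c : ZMod p => c ≠ 0), 1 / ((p:ℝ)^(a+1) * cs p c)
        = (1/(p:ℝ)^(a+1)) * (((p:ℝ)^2 - 1)/3) := by
    intro b
    rw [← sum_csc p, Finset.mul_sum]
    exact Finset.sum_congr rfl fun c _ => by rw [one_div, mul_inv, ← one_div, ← one_div]
  rw [Finset.sum_congr rfl (fun b _ => hinner b), Finset.sum_const]
  have hcard : (Finset.univ : Finset (Fin a → ZMod p)).card = p ^ a := by
    haveI : NeZero p := ⟨(p_pos p).ne'⟩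
    simp [ZMod.card]
  rw [hcard, nsmul_eq_mul]
  have hp0 : (p:ℝ) ≠ 0 := by exact_mod_cast (p_pos p).ne'
  push_cast
  field_simp
  ring

lemma Wsum_eq (s : ℕ) :
    ∑ h ∈ (Gset p s).filter (fun h => h ≠ 0), rp p h
      = (s:ℝ) * (((p:ℝ)^2 - 1)/3) / p := by
  classical
  have hmaps : ∀ h ∈ (Gset p s).filter (fun h => h ≠ 0), h.natDegree ∈ Finset.range s := by
    intro h hmem
    simp only [Finset.mem_filter, mem_Gset] at hmem
    exact Finset.mem_range.mpr ((Polynomial.natDegree_lt_iff_degree_lt hmem.2).mpr hmem.1)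
  rw [← Finset.sum_fiberwise_of_maps_to hmaps]
  rw [Finset.sum_congr rfl (fun a haa => rp_sum_fiber p s a (Finset.mem_range.mp haa))]
  rw [Finset.sum_const, Finset.card_range, nsmul_eq_mul]
  ring

end counting
section gsum
variable (p : ℕ) [Fact p.Prime]

lemma Usum_eq (m j : ℕ) (hj : j ≤ m) :
    ∑ h ∈ (Gset p m).filter (fun h => h ≠ 0 ∧ Polynomial.X ^ j ∣ h), rp p h
      = (((m - j : ℕ):ℝ) * (((p:ℝ)^2 - 1)/3) / p) / (p:ℝ)^j := by
  classical
  have hXj : (Polynomial.X : Polynomial (ZMod p)) ^ j ≠ 0 := pow_ne_zero _ Polynomial.X_ne_zero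
  have key : ∑ h ∈ (Gset p m).filter (fun h => h ≠ 0 ∧ Polynomial.X ^ j ∣ h), rp p h
      = ∑ h ∈ (Gset p (m - j)).filter (fun h => h ≠ 0), rp p h / (p:ℝ)^j := by
    refine (Finset.sum_bij
      (fun (h : Polynomial (ZMod p)) (_ : h ∈ (Gset p (m - j)).filter (fun h => h ≠ 0)) =>
        Polynomial.X ^ j * h) ?_ ?_ ?_ ?_).symm
    · intro h hmem
      simp only [Finset.mem_filter, mem_Gset] at hmem ⊢
      obtain ⟨hdeg, hne⟩ := hmem
      have hnd : h.natDegree < m - j := (Polynomial.natDegree_lt_iff_degree_lt hne).mpr hdeg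
      have hne2 : Polynomial.X ^ j * h ≠ 0 := mul_ne_zero hXj hne
      refine ⟨?_, hne2, Dvd.intro _ rfl⟩
      rw [← Polynomial.natDegree_lt_iff_degree_lt hne2,
        Polynomial.natDegree_mul hXj hne, Polynomial.natDegree_X_pow]
      omega
    · intro h1 hm1 h2 hm2 heq
      exact mul_left_cancel₀ hXj heq
    · intro h hmem
      simp only [Finset.mem_filter, mem_Gset] at hmem
      obtain ⟨hdeg, hne, hdvd⟩ := hmem
      obtain ⟨h'', rfl⟩ := hdvd
      have hne'' : h'' ≠ 0 := fun h0 => hne (by rw [h0, mul_zero])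
      refine ⟨h'', ?_, rfl⟩
      simp only [Finset.mem_filter, mem_Gset]
      refine ⟨?_, hne''⟩
      have hnd : (Polynomial.X ^ j * h'').natDegree < m :=
        (Polynomial.natDegree_lt_iff_degree_lt (mul_ne_zero hXj hne'')).mpr hdeg
      rw [Polynomial.natDegree_mul hXj hne'', Polynomial.natDegree_X_pow] at hnd
      rw [← Polynomial.natDegree_lt_iff_degree_lt hne'']
      omega
    · intro h hmem
      simp only [Finset.mem_filter, mem_Gset] at hmem
      exact (rp_X_pow_mul p j hmem.2).symm
  rw [key, ← Finset.sum_div, Wsum_eq]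

lemma ep_sum {ι : Type*} (s : Finset ι) (f : ι → ZMod p) :
    ep p (∑ i ∈ s, f i) = ∏ i ∈ s, ep p (f i) := by
  classical
  induction s using Finset.cons_induction with
  | empty => simp [ep_zero]
  | cons a s ha ih => rw [Finset.sum_cons, Finset.prod_cons, ep_add, ih]

lemma coprime_X_iff (g : Polynomial (ZMod p)) :
    IsCoprime g (Polynomial.X : Polynomial (ZMod p)) ↔ g.coeff 0 ≠ 0 := by
  rw [isCoprime_comm, (Polynomial.prime_X).coprime_iff_not_dvd, Polynomial.X_dvd_iff]

lemma gsum_eq (n : ℕ) (hn : 0 < n) (v : Polynomial (ZMod p)) :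
    ∑ g ∈ (Gset p n).filter (fun g => IsCoprime g (Polynomial.X : Polynomial (ZMod p))),
        ep p ((v * g).coeff (n - 1))
      = if ∀ t < n - 1, v.coeff t = 0 then
          (if v.coeff (n - 1) = 0 then ((p:ℂ) - 1) else -1) * (p:ℂ)^(n-1)
        else 0 := by
  classical
  have hcop : ∀ g : Polynomial (ZMod p),
      IsCoprime g (Polynomial.X : Polynomial (ZMod p)) ↔ g.coeff 0 ≠ 0 := coprime_X_iff p
  have hfil : (Gset p n).filter (fun g => IsCoprime g (Polynomial.X : Polynomial (ZMod p)))
      = (Finset.univ.filter (fun a : Fin n → ZMod p => a ⟨0, hn⟩ ≠ 0)).image (phiP p n) := by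
    rw [Gset_eq_image, Finset.filter_image]
    congr 1
    apply Finset.filter_congr
    intro a _
    rw [hcop, coeff_phiP]
    simp only [hn, dif_pos]
  rw [hfil, Finset.sum_image (fun a _ b _ hab => phiP_injective p n hab)]
  -- coefficient formula
  have hcoeff : ∀ a : Fin n → ZMod p,
      (v * phiP p n a).coeff (n - 1) = ∑ t : Fin n, v.coeff (n - 1 - (t:ℕ)) * a t := by
    intro a
    have hn1 : (n - 1) + 1 = n := by omega
    calc (v * phiP p n a).coeff (n - 1)
        = ∑ q ∈ Finset.range n, v.coeff q * (phiP p n a).coeff (n - 1 - q) := by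
          rw [Polynomial.coeff_mul, Finset.Nat.sum_antidiagonal_eq_sum_range_succ_mk,
            Nat.succ_eq_add_one, hn1]
      _ = ∑ q ∈ Finset.range n, v.coeff (n - 1 - q) * (phiP p n a).coeff (n - 1 - (n - 1 - q)) :=
          (Finset.sum_range_reflect (fun q => v.coeff q * (phiP p n a).coeff (n - 1 - q)) n).symm
      _ = ∑ q ∈ Finset.range n, v.coeff (n - 1 - q) * (phiP p n a).coeff q := by
          refine Finset.sum_congr rfl fun q hq => ?_
          have hq' := Finset.mem_range.mp hq
          congr 2
          omega
      _ = ∑ t : Fin n, v.coeff (n - 1 - (t:ℕ)) * (phiP p n a).coeff (t:ℕ) :=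
          Finset.sum_range (fun q => v.coeff (n - 1 - q) * (phiP p n a).coeff q)
      _ = ∑ t : Fin n, v.coeff (n - 1 - (t:ℕ)) * a t := by
          refine Finset.sum_congr rfl fun t _ => ?_
          rw [coeff_phiP]
          simp only [t.isLt, dif_pos]
  rw [Finset.sum_congr rfl (fun a _ => by rw [hcoeff a, ep_sum])]
  set z : Fin n := ⟨0, hn⟩ with hz
  set st : Fin n → Finset (ZMod p) :=
    fun t => if t = z then Finset.univ.filter (fun c : ZMod p => c ≠ 0) else Finset.univ with hst
  have hpi : Finset.univ.filter (fun a : Fin n → ZMod p => a z ≠ 0) = Fintype.piFinset st := by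
    ext a
    simp only [Finset.mem_filter, Finset.mem_univ, true_and, Fintype.mem_piFinset]
    constructor
    · intro h i
      by_cases hi : i = z
      · subst hi; simp [hst, h]
      · simp [hst, hi]
    · intro h
      have := h z
      simpa [hst] using this
  rw [hpi, ← Finset.prod_univ_sum st (fun i c => ep p (v.coeff (n - 1 - (i:ℕ)) * c))]
  rw [← Finset.mul_prod_erase Finset.univ _ (Finset.mem_univ z)]
  have hfac0 : ∑ c ∈ st z, ep p (v.coeff (n - 1 - ((z:Fin n):ℕ)) * c)
      = if v.coeff (n - 1) = 0 then ((p:ℂ) - 1) else -1 := by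
    have hz0 : ((z : Fin n):ℕ) = 0 := rfl
    rw [hz0, Nat.sub_zero, hst]
    simp only [if_pos rfl]
    exact sum_ep_mul_ne p _
  by_cases hall : ∀ t < n - 1, v.coeff t = 0
  · rw [if_pos hall, hfac0]
    congr 1
    have hrest : ∀ t ∈ Finset.univ.erase z,
        ∑ c ∈ st t, ep p (v.coeff (n - 1 - ((t:Fin n):ℕ)) * c) = (p:ℂ) := by
      intro t ht
      have htz : t ≠ z := (Finset.mem_erase.mp ht).1
      have ht1 : 1 ≤ (t:ℕ) := by
        by_contra hcon
        apply htz
        apply Fin.ext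
        have hz0 : ((z : Fin n):ℕ) = 0 := rfl
        omega
      have hcz : v.coeff (n - 1 - (t:ℕ)) = 0 := hall _ (by omega)
      rw [hst]
      simp only [if_neg htz]
      rw [sum_ep_mul, if_pos hcz]
    rw [Finset.prod_congr rfl hrest, Finset.prod_const,
      Finset.card_erase_of_mem (Finset.mem_univ z), Finset.card_univ, Fintype.card_fin]
  · rw [if_neg hall]
    push_neg at hall
    obtain ⟨t0, ht0, hv0⟩ := hall
    have htt : (n - 1 - t0) < n := by omega
    set tt : Fin n := ⟨n - 1 - t0, htt⟩ with htt'
    have httz : tt ≠ z := by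
      intro hcon
      have := congrArg (fun x : Fin n => (x:ℕ)) hcon
      simp only [htt', hz] at this
      omega
    have httmem : tt ∈ Finset.univ.erase z := Finset.mem_erase.mpr ⟨httz, Finset.mem_univ _⟩
    have hzero : ∑ c ∈ st tt, ep p (v.coeff (n - 1 - ((tt:Fin n):ℕ)) * c) = 0 := by
      have hind : n - 1 - ((tt:Fin n):ℕ) = t0 := by
        simp only [htt']
        omega
      rw [hind, hst]
      simp only [if_neg httz]
      rw [sum_ep_mul, if_neg hv0]
    rw [Finset.prod_eq_zero httmem hzero, mul_zero]

end gsum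
theorem Y_eq (p : ℕ) [Fact p.Prime] (m w k : ℕ) (hw : w < m)
    (ℓ : Polynomial (ZMod p)) (hℓ0 : ℓ ≠ 0) (hℓdeg : ℓ.degree < ((m - w : ℕ) : WithBot ℕ))
    (hk : k ≤ m - w - 1)
    (hdvd : (Polynomial.X : Polynomial (ZMod p)) ^ k ∣ ℓ)
    (hndvd : ¬ (Polynomial.X : Polynomial (ZMod p)) ^ (k + 1) ∣ ℓ) :
    ∑ g ∈ (Gset p (m - w)).filter (fun g => IsCoprime g (Polynomial.X : Polynomial (ZMod p))),
      ∑ h ∈ (Gset p m).filter (fun h => h ≠ 0),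
        (rp p h : ℂ) *
          Xp p (algebraMap (Polynomial (ZMod p)) (RatFunc (ZMod p)) ℓ
            / algebraMap (Polynomial (ZMod p)) (RatFunc (ZMod p)) (Polynomial.X ^ (m - w))
            * algebraMap (Polynomial (ZMod p)) (RatFunc (ZMod p)) (h * g))
      = -(((p : ℂ) ^ 2 - 1) / (3 * (p : ℂ))) * (p : ℂ) ^ k := by
  classical
  have hp0 : ((p:ℂ)) ≠ 0 := hpC p
  set n := m - w with hn'
  have hn : 0 < n := by omega
  have hkn : k ≤ n - 1 := hk
  have hnm : n ≤ m := by omega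
  set j : ℕ := n - 1 - k with hj'
  have hjk : k + j = n - 1 := by omega
  have hj1 : j + 1 ≤ m := by omega
  -- Step 1: the Xp term is ep of a coefficient
  have hXp : ∀ h g : Polynomial (ZMod p),
      Xp p (algebraMap (Polynomial (ZMod p)) (RatFunc (ZMod p)) ℓ
          / algebraMap (Polynomial (ZMod p)) (RatFunc (ZMod p)) (Polynomial.X ^ n)
          * algebraMap (Polynomial (ZMod p)) (RatFunc (ZMod p)) (h * g))
        = ep p (((ℓ * h) * g).coeff (n - 1)) := by
    intro h g
    have hq : algebraMap (Polynomial (ZMod p)) (RatFunc (ZMod p)) ℓ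
        / algebraMap (Polynomial (ZMod p)) (RatFunc (ZMod p)) (Polynomial.X ^ n)
        * algebraMap (Polynomial (ZMod p)) (RatFunc (ZMod p)) (h * g)
        = algebraMap (Polynomial (ZMod p)) (RatFunc (ZMod p)) ((ℓ * h) * g)
          / algebraMap (Polynomial (ZMod p)) (RatFunc (ZMod p)) (Polynomial.X ^ n) := by
      rw [div_mul_eq_mul_div, ← map_mul, ← mul_assoc]
    show ep p ((laurentAtInfty p _).coeff 1) = _
    rw [hq, laurent_coeff_one p _ n hn]
  -- Step 2: swap sums and evaluate the g-sum
  rw [Finset.sum_comm]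
  rw [Finset.sum_congr rfl (fun h _ => by
    rw [Finset.sum_congr rfl (fun g _ => by rw [hXp h g]), ← Finset.mul_sum,
      gsum_eq p n hn (ℓ * h)])]
  -- Step 3: divisibility transfer
  have hdt : ∀ (r : ℕ) (h : Polynomial (ZMod p)),
      (Polynomial.X : Polynomial (ZMod p)) ^ (k + r) ∣ ℓ * h ↔ Polynomial.X ^ r ∣ h := by
    intro r h
    obtain ⟨u, hu⟩ := hdvd
    have hXu : ¬ (Polynomial.X : Polynomial (ZMod p)) ∣ u := by
      intro ⟨u', hu'⟩
      exact hndvd ⟨u', by rw [hu, hu', pow_succ]; ring⟩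
    constructor
    · intro hdd
      rw [hu, pow_add, mul_assoc] at hdd
      have h1 : (Polynomial.X : Polynomial (ZMod p)) ^ r ∣ u * h :=
        (mul_dvd_mul_iff_left (pow_ne_zero k (Polynomial.X_ne_zero (R := ZMod p)))).mp hdd
      exact (Polynomial.prime_X (R := ZMod p)).pow_dvd_of_dvd_mul_left r hXu h1
    · intro hdd
      rw [hu, pow_add, mul_assoc]
      exact mul_dvd_mul_left _ (Dvd.dvd.mul_left hdd u)
  -- Step 4: rewrite the per-h factor via divisibility
  have hfac : ∀ h : Polynomial (ZMod p), h ≠ 0 →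
      (if ∀ t < n - 1, (ℓ * h).coeff t = 0 then
          (if (ℓ * h).coeff (n - 1) = 0 then ((p:ℂ) - 1) else -1) * (p:ℂ)^(n-1)
        else 0)
      = (p:ℂ)^(n-1) * ((if Polynomial.X ^ (j+1) ∣ h then (p:ℂ) else 0)
          - (if Polynomial.X ^ j ∣ h then 1 else 0)) := by
    intro h hh
    have e1 : (∀ t < n - 1, (ℓ * h).coeff t = 0) ↔ Polynomial.X ^ j ∣ h := by
      rw [← hdt j h, show k + j = n - 1 from hjk, Polynomial.X_pow_dvd_iff]
    have e2 : (∀ t < n, (ℓ * h).coeff t = 0) ↔ Polynomial.X ^ (j+1) ∣ h := by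
      rw [← hdt (j+1) h, show k + (j+1) = n by omega, Polynomial.X_pow_dvd_iff]
    by_cases d1 : Polynomial.X ^ j ∣ h
    · rw [if_pos (e1.mpr d1)]
      by_cases d2 : Polynomial.X ^ (j+1) ∣ h
      · have hc : (ℓ * h).coeff (n - 1) = 0 := (e2.mpr d2) (n-1) (by omega)
        rw [if_pos hc, if_pos d2, if_pos d1]
        ring
      · have hc : (ℓ * h).coeff (n - 1) ≠ 0 := by
          intro hc0
          apply d2
          apply e2.mp
          intro t ht
          rcases Nat.lt_or_ge t (n-1) with ht' | ht'
          · exact (e1.mpr d1) t ht'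
          · have : t = n - 1 := by omega
            rw [this]; exact hc0
        rw [if_neg hc, if_neg d2, if_pos d1]
        ring
    · have d2 : ¬ Polynomial.X ^ (j+1) ∣ h := fun hdd =>
        d1 (dvd_trans (pow_dvd_pow _ (by omega)) hdd)
      rw [if_neg (fun hcon => d1 (e1.mp hcon)), if_neg d2, if_neg d1]
      ring
  rw [Finset.sum_congr rfl (fun h hmem => by
    rw [hfac h (Finset.mem_filter.mp hmem).2])]
  -- Step 5: split the sum
  have hsplit : ∑ h ∈ (Gset p m).filter (fun h => h ≠ 0),
      (rp p h : ℂ) * ((p:ℂ)^(n-1) * ((if Polynomial.X ^ (j+1) ∣ h then (p:ℂ) else 0)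
        - (if Polynomial.X ^ j ∣ h then 1 else 0)))
      = (p:ℂ)^(n-1) * ((p:ℂ) *
          (∑ h ∈ (Gset p m).filter (fun h => h ≠ 0 ∧ Polynomial.X ^ (j+1) ∣ h), (rp p h : ℂ))
        - ∑ h ∈ (Gset p m).filter (fun h => h ≠ 0 ∧ Polynomial.X ^ j ∣ h), (rp p h : ℂ)) := by
    have h1 : ∀ (r : ℕ), (Gset p m).filter (fun h => h ≠ 0 ∧ Polynomial.X ^ r ∣ h)
        = ((Gset p m).filter (fun h => h ≠ 0)).filter (fun h => Polynomial.X ^ r ∣ h) := by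
      intro r
      rw [Finset.filter_filter]
    have hA : ∀ r : ℕ,
        ∑ h ∈ (Gset p m).filter (fun h => h ≠ 0),
            (if Polynomial.X ^ r ∣ h then (rp p h:ℂ) else 0)
          = ∑ h ∈ (Gset p m).filter (fun h => h ≠ 0 ∧ Polynomial.X ^ r ∣ h), (rp p h : ℂ) := by
      intro r; rw [h1]; exact (Finset.sum_filter _ _).symm
    rw [← hA, ← hA]
    rw [Finset.mul_sum, ← Finset.sum_sub_distrib, Finset.mul_sum]
    refine Finset.sum_congr rfl fun h _ => ?_
    split_ifs <;> ring
  rw [hsplit]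
  -- Step 6: evaluate the rp sums
  have hsum : ∀ (r : ℕ), r ≤ m →
      ∑ h ∈ (Gset p m).filter (fun h => h ≠ 0 ∧ Polynomial.X ^ r ∣ h), (rp p h : ℂ)
        = ((((m - r : ℕ):ℝ) * (((p:ℝ)^2 - 1)/3) / p / (p:ℝ)^r : ℝ) : ℂ) := by
    intro r hr
    rw [← Complex.ofReal_sum, ← Usum_eq p m r hr]
  rw [hsum (j+1) hj1, hsum j (by omega)]
  -- Step 7: final arithmetic
  have hA : (m - j : ℕ) = (m - (j+1) : ℕ) + 1 := by omega
  rw [hA]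
  have hnk : n - 1 = k + j := hjk.symm
  rw [hnk, pow_add]
  push_cast
  field_simp
  ring
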